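/- For reals c₁,…,c_{n-1}, the identity (∑_{1≤i<j} c_ic_j)² - ∑_{1≤i<j} (c_ic_j)² = 2∑_{i<j<k}(c_i²c_jc_k + c_ic_j²c_k + c_ic_jc_k²) + 6∑_{i<j<k<l} c_ic_jc_kc_l holds; moreover, if additionally c₀ = -∑_{i≥1} c_i and sums range over 0 ≤ i < j (< k < l) ≤ n-1, then (∑_{i<j} c_ic_j)² - ∑_{i<j}(c_ic_j)² = -2 ∑_{i<j<k<l} c_ic_jc_kc_l. -/
import Mathlib


open Finset

private lemma sum_pcard_insert {α : Type*} [DecidableEq α] {a : α} {s : Finset α}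
    (h : a ∉ s) (k : ℕ) (f : Finset α → ℝ) :
    ∑ S ∈ (insert a s).powersetCard (k + 1), f S =
      ∑ S ∈ s.powersetCard (k + 1), f S + ∑ S ∈ s.powersetCard k, f (insert a S) := by
  rw [powersetCard_succ_insert h, sum_union, sum_image]
  · intro x hx y hy hxy
    have hx' : a ∉ x := fun hc => h ((mem_powersetCard.1 hx).1 hc)
    have hy' : a ∉ y := fun hc => h ((mem_powersetCard.1 hy).1 hc)
    have : erase (insert a x) a = erase (insert a y) a := by rw [hxy]
    rwa [erase_insert hx', erase_insert hy'] at this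
  · rw [disjoint_left]
    intro S hS hS'
    obtain ⟨T, hT, rfl⟩ := mem_image.1 hS'
    exact h ((mem_powersetCard.1 hS).1 (mem_insert_self a T))

private lemma sum_pcard_one {α : Type*} [DecidableEq α] (s : Finset α) (f : Finset α → ℝ) :
    ∑ S ∈ s.powersetCard 1, f S = ∑ i ∈ s, f {i} := by
  rw [powersetCard_one, sum_map]
  rfl

private lemma key (n : ℕ) (c : Fin n → ℝ) (s : Finset (Fin n)) :
    2 * (∑ S ∈ s.powersetCard 2, ∏ i ∈ S, c i) =
        (∑ i ∈ s, c i) ^ 2 - ∑ i ∈ s, (c i) ^ 2 ∧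
      (∑ S ∈ s.powersetCard 2, (∏ i ∈ S, c i) * (∑ i ∈ S, c i)) =
        (∑ i ∈ s, c i) * (∑ S ∈ s.powersetCard 2, ∏ i ∈ S, c i) -
          3 * ∑ S ∈ s.powersetCard 3, ∏ i ∈ S, c i ∧
      (∑ S ∈ s.powersetCard 3, (∏ i ∈ S, c i) * (∑ i ∈ S, c i)) =
        (∑ i ∈ s, c i) * (∑ S ∈ s.powersetCard 3, ∏ i ∈ S, c i) -
          4 * ∑ S ∈ s.powersetCard 4, ∏ i ∈ S, c i ∧
      (∑ S ∈ s.powersetCard 2, ∏ i ∈ S, c i) ^ 2 -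
          ∑ S ∈ s.powersetCard 2, (∏ i ∈ S, c i) ^ 2 =
        2 * (∑ S ∈ s.powersetCard 3, (∏ i ∈ S, c i) * (∑ i ∈ S, c i)) +
          6 * ∑ S ∈ s.powersetCard 4, ∏ i ∈ S, c i := by
  classical
  induction s using Finset.induction with
  | empty =>
    have h2 : (∅ : Finset (Fin n)).powersetCard 2 = ∅ := powersetCard_eq_empty.2 (by simp)
    have h3 : (∅ : Finset (Fin n)).powersetCard 3 = ∅ := powersetCard_eq_empty.2 (by simp)
    have h4 : (∅ : Finset (Fin n)).powersetCard 4 = ∅ := powersetCard_eq_empty.2 (by simp)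
    simp [h2, h3, h4]
  | @insert a s h ih =>
    obtain ⟨ih1, ih2, ih3, ih4⟩ := ih
    have hnm1 : ∀ i ∈ s, a ∉ ({i} : Finset (Fin n)) := by
      intro i hi hc
      rw [mem_singleton] at hc
      exact h (hc ▸ hi)
    have hnm2 : ∀ S ∈ s.powersetCard 2, a ∉ S := fun S hS hc =>
      h ((mem_powersetCard.1 hS).1 hc)
    have hnm3 : ∀ S ∈ s.powersetCard 3, a ∉ S := fun S hS hc =>
      h ((mem_powersetCard.1 hS).1 hc)
    have pe : ∑ i ∈ insert a s, c i = c a + ∑ i ∈ s, c i := sum_insert h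
    have p2e : ∑ i ∈ insert a s, (c i) ^ 2 = (c a) ^ 2 + ∑ i ∈ s, (c i) ^ 2 := sum_insert h
    have e2e : ∑ S ∈ (insert a s).powersetCard 2, ∏ i ∈ S, c i =
        (∑ S ∈ s.powersetCard 2, ∏ i ∈ S, c i) + c a * ∑ i ∈ s, c i := by
      rw [show (2 : ℕ) = 1 + 1 from rfl, sum_pcard_insert h 1, sum_pcard_one, mul_sum]
      congr 1
      refine sum_congr rfl fun i hi => ?_
      rw [prod_insert (hnm1 i hi), prod_singleton]
    have e3e : ∑ S ∈ (insert a s).powersetCard 3, ∏ i ∈ S, c i =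
        (∑ S ∈ s.powersetCard 3, ∏ i ∈ S, c i) +
          c a * ∑ S ∈ s.powersetCard 2, ∏ i ∈ S, c i := by
      rw [show (3 : ℕ) = 2 + 1 from rfl, sum_pcard_insert h 2, mul_sum]
      congr 1
      exact sum_congr rfl fun S hS => prod_insert (hnm2 S hS)
    have e4e : ∑ S ∈ (insert a s).powersetCard 4, ∏ i ∈ S, c i =
        (∑ S ∈ s.powersetCard 4, ∏ i ∈ S, c i) +
          c a * ∑ S ∈ s.powersetCard 3, ∏ i ∈ S, c i := by
      rw [show (4 : ℕ) = 3 + 1 from rfl, sum_pcard_insert h 3, mul_sum]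
      congr 1
      exact sum_congr rfl fun S hS => prod_insert (hnm3 S hS)
    have q2e : ∑ S ∈ (insert a s).powersetCard 2, (∏ i ∈ S, c i) ^ 2 =
        (∑ S ∈ s.powersetCard 2, (∏ i ∈ S, c i) ^ 2) +
          (c a) ^ 2 * ∑ i ∈ s, (c i) ^ 2 := by
      rw [show (2 : ℕ) = 1 + 1 from rfl, sum_pcard_insert h 1, sum_pcard_one, mul_sum]
      congr 1
      refine sum_congr rfl fun i hi => ?_
      rw [prod_insert (hnm1 i hi), prod_singleton, mul_pow]
    have t2e : ∑ S ∈ (insert a s).powersetCard 2, (∏ i ∈ S, c i) * (∑ i ∈ S, c i) =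
        (∑ S ∈ s.powersetCard 2, (∏ i ∈ S, c i) * (∑ i ∈ S, c i)) +
          ((c a) ^ 2 * ∑ i ∈ s, c i + c a * ∑ i ∈ s, (c i) ^ 2) := by
      rw [show (2 : ℕ) = 1 + 1 from rfl, sum_pcard_insert h 1, sum_pcard_one]
      congr 1
      rw [sum_congr rfl (fun i hi => show
            (∏ j ∈ insert a {i}, c j) * (∑ j ∈ insert a {i}, c j) =
              (c a) ^ 2 * c i + c a * (c i) ^ 2 by
          rw [prod_insert (hnm1 i hi), sum_insert (hnm1 i hi), prod_singleton,
            sum_singleton]; ring),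
        sum_add_distrib, ← mul_sum, ← mul_sum]
    have t3e : ∑ S ∈ (insert a s).powersetCard 3, (∏ i ∈ S, c i) * (∑ i ∈ S, c i) =
        (∑ S ∈ s.powersetCard 3, (∏ i ∈ S, c i) * (∑ i ∈ S, c i)) +
          ((c a) ^ 2 * ∑ S ∈ s.powersetCard 2, ∏ i ∈ S, c i +
            c a * ∑ S ∈ s.powersetCard 2, (∏ i ∈ S, c i) * (∑ i ∈ S, c i)) := by
      rw [show (3 : ℕ) = 2 + 1 from rfl, sum_pcard_insert h 2]
      congr 1
      rw [sum_congr rfl (fun S hS => show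
            (∏ j ∈ insert a S, c j) * (∑ j ∈ insert a S, c j) =
              (c a) ^ 2 * (∏ j ∈ S, c j) +
                c a * ((∏ j ∈ S, c j) * (∑ j ∈ S, c j)) by
          rw [prod_insert (hnm2 S hS), sum_insert (hnm2 S hS)]; ring),
        sum_add_distrib, ← mul_sum, ← mul_sum]
    rw [pe, p2e, e2e, e3e, e4e, q2e, t2e, t3e]
    refine ⟨by linear_combination ih1, by linear_combination ih2 + c a * ih1,
      by linear_combination ih3 + c a * ih2,
      by linear_combination ih4 - (c a) ^ 2 * ih1 - 2 * c a * ih2⟩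

theorem symmetric_identity (n : ℕ) [NeZero n] (c : Fin n → ℝ) :
    ((∑ S ∈ (univ.erase (0 : Fin n)).powersetCard 2, ∏ i ∈ S, c i) ^ 2 -
        ∑ S ∈ (univ.erase (0 : Fin n)).powersetCard 2, (∏ i ∈ S, c i) ^ 2 =
      2 * ∑ S ∈ (univ.erase (0 : Fin n)).powersetCard 3,
          (∏ i ∈ S, c i) * (∑ i ∈ S, c i) +
        6 * ∑ S ∈ (univ.erase (0 : Fin n)).powersetCard 4, ∏ i ∈ S, c i) ∧
    (c 0 = -∑ i ∈ univ.erase (0 : Fin n), c i →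
      (∑ S ∈ (univ : Finset (Fin n)).powersetCard 2, ∏ i ∈ S, c i) ^ 2 -
          ∑ S ∈ (univ : Finset (Fin n)).powersetCard 2, (∏ i ∈ S, c i) ^ 2 =
        -2 * ∑ S ∈ (univ : Finset (Fin n)).powersetCard 4, ∏ i ∈ S, c i) := by
  constructor
  · exact (key n c _).2.2.2
  · intro h0
    obtain ⟨k1, k2, k3, k4⟩ := key n c univ
    have hsum : ∑ i ∈ (univ : Finset (Fin n)), c i = 0 := by
      rw [← Finset.add_sum_erase _ _ (mem_univ (0 : Fin n)), h0]
      ring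
    rw [k4, k3, hsum]
    ring
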